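/- Let G be a graph, s ∈ V(G), and (S,F) a bipartite subgraph of G with s ∈ S. Then the maximum number of pairwise edge-disjoint odd (s,s)-trails in G is at most |E(S)\F| + the sum over components C of G−S of floor(|E(S,C)|/2). -/

import Mathlib

open SimpleGraph

lemma aux_reach {V : Type*} {G : SimpleGraph V} {Sc : Set V} {u v : V}
    (p : G.Walk u v) (hp : ∀ x ∈ p.support, x ∈ Sc) :
    (G.induce Sc).Reachable ⟨u, hp u p.start_mem_support⟩ ⟨v, hp v p.end_mem_support⟩ := by
  induction p with
  | nil => exact Reachable.refl _
  | @cons a b c h q ih =>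
    have hb : b ∈ Sc := hp b (by simp)
    have := ih (fun x hx => hp x (by simp [hx]))
    exact Reachable.trans (Adj.reachable (by exact h : (G.induce Sc).Adj ⟨a, _⟩ ⟨b, hb⟩)) this

lemma aux_exit {V : Type*} {G : SimpleGraph V} {S : Set V} {u v : V}
    (p : G.Walk u v) (hv : v ∉ S) :
    (∀ x ∈ p.support, x ∉ S) ∨
    ∃ (a b : V) (hb : b ∈ Sᶜ), a ∈ S ∧ s(a, b) ∈ p.edges ∧
      (G.induce Sᶜ).Reachable ⟨b, hb⟩ ⟨v, hv⟩ := by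
  induction p with
  | nil => left; simpa using hv
  | @cons a b c h q ih =>
    rcases ih hv with hall | ⟨x, y, hy, hxS, hxy, hre⟩
    · by_cases ha : a ∈ S
      · right
        have hb : b ∈ Sᶜ := hall b q.start_mem_support
        refine ⟨a, b, hb, ha, by simp, ?_⟩
        exact aux_reach q (fun x hx => hall x hx)
      · left; intro x hx
        rcases (SimpleGraph.Walk.mem_support_iff _).1 hx with rfl | hx
        · exact ha
        · exact hall x hx
    · right; exact ⟨x, y, hy, hxS, by simp [hxy], hre⟩

lemma aux_parity {V : Type*} {col : V → Bool} {F : Set (Sym2 V)} {G : SimpleGraph V}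
    (hbip : ∀ x y : V, s(x, y) ∈ F → col x ≠ col y) {u v : V} (p : G.Walk u v)
    (hF : ∀ e ∈ p.edges, e ∈ F) : (col u = col v) ↔ Even p.length := by
  induction p with
  | nil => simp
  | @cons a b c h q ih =>
    have h1 := hbip a b (hF _ (by simp))
    have h2 := ih (fun e he => hF e (by simp [he]))
    simp only [SimpleGraph.Walk.length_cons, Nat.even_add_one, ← h2]
    revert h1
    cases hab : col a <;> cases hbb : col b <;> cases hcb : col c <;> simp

theorem stmt_10 {V : Type*} [Fintype V] (G : SimpleGraph V) (s : V)
    (S : Set V) (hs : s ∈ S) (F : Set (Sym2 V)) (hFE : F ⊆ G.edgeSet)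
    (hFS : ∀ e ∈ F, ∀ x ∈ e, x ∈ S)
    (col : V → Bool) (hbip : ∀ x y : V, s(x, y) ∈ F → col x ≠ col y)
    (n : ℕ) (T : Fin n → G.Walk s s)
    (htrail : ∀ i, (T i).IsTrail) (hodd : ∀ i, Odd (T i).length)
    (hdisj : ∀ i j, i ≠ j → ∀ e ∈ (T i).edges, e ∉ (T j).edges) :
    n ≤ {e ∈ G.edgeSet | (∀ x ∈ e, x ∈ S) ∧ e ∉ F}.ncard +
      ∑ᶠ K : (G.induce Sᶜ).ConnectedComponent,
        {e ∈ G.edgeSet | ∃ (x y : V) (hy : y ∈ Sᶜ),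
          e = s(x, y) ∧ x ∈ S ∧ (G.induce Sᶜ).connectedComponentMk ⟨y, hy⟩ = K}.ncard / 2 := by
  classical
  set A : Set (Sym2 V) := {e ∈ G.edgeSet | (∀ x ∈ e, x ∈ S) ∧ e ∉ F} with hA
  set EK : (G.induce Sᶜ).ConnectedComponent → Set (Sym2 V) := fun K =>
    {e ∈ G.edgeSet | ∃ (x y : V) (hy : y ∈ Sᶜ),
      e = s(x, y) ∧ x ∈ S ∧ (G.induce Sᶜ).connectedComponentMk ⟨y, hy⟩ = K} with hEK
  -- dichotomy
  have key : ∀ i : Fin n, (∃ e ∈ (T i).edges, e ∈ A) ∨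
      ∃ (K : (G.induce Sᶜ).ConnectedComponent) (e1 e2 : Sym2 V),
        e1 ∈ (T i).edges ∧ e2 ∈ (T i).edges ∧ e1 ≠ e2 ∧ e1 ∈ EK K ∧ e2 ∈ EK K := by
    intro i
    by_cases hsub : ∀ x ∈ (T i).support, x ∈ S
    · left
      by_contra hcon
      push_neg at hcon
      have hallF : ∀ e ∈ (T i).edges, e ∈ F := by
        intro e he
        by_contra heF
        refine hcon e he ⟨(T i).edges_subset_edgeSet he, ?_, heF⟩
        intro x hx
        induction e with
        | h a b =>
          rcases Sym2.mem_iff.1 hx with rfl | rfl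
          · exact hsub x ((T i).fst_mem_support_of_mem_edges he)
          · exact hsub x ((T i).snd_mem_support_of_mem_edges he)
      have := (aux_parity hbip (T i) hallF).1 rfl
      exact (Nat.not_even_iff_odd.2 (hodd i)) this
    · right
      push_neg at hsub
      obtain ⟨w, hw, hwS⟩ := hsub
      set p1 := (T i).takeUntil w hw with hp1
      set p2 := (T i).dropUntil w hw with hp2
      have hwc : w ∈ Sᶜ := hwS
      rcases aux_exit p1 hwS with hall | ⟨a, b, hb, ha, he1, hre1⟩
      · exact absurd hs (hall s p1.start_mem_support)
      rcases aux_exit p2.reverse hwS with hall | ⟨c, d, hd, hc, he2, hre2⟩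
      · exact absurd hs (hall s p2.reverse.start_mem_support)
      refine ⟨(G.induce Sᶜ).connectedComponentMk ⟨w, hwc⟩, s(a, b), s(c, d),
        (T i).edges_takeUntil_subset hw he1,
        (T i).edges_dropUntil_subset hw (by simpa using he2), ?_, ?_, ?_⟩
      · -- distinct: nodup of edges of T i which is p1.edges ++ p2.edges
        have hnd : ((T i).takeUntil w hw).edges.Disjoint ((T i).dropUntil w hw).edges := by
          have := (htrail i).edges_nodup
          rw [← (T i).take_spec hw, Walk.edges_append, List.nodup_append] at this
          exact fun a ha hb => this.2.2 a ha a hb rfl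
        intro hEq
        exact hnd he1 (hEq ▸ (by simpa using he2))
      · exact ⟨(T i).edges_subset_edgeSet ((T i).edges_takeUntil_subset hw he1),
          a, b, hb, rfl, ha, ConnectedComponent.sound hre1⟩
      · exact ⟨(T i).edges_subset_edgeSet ((T i).edges_dropUntil_subset hw (by simpa using he2)),
          c, d, hd, rfl, hc, ConnectedComponent.sound hre2⟩
  -- counting
  haveI : Finite (G.induce Sᶜ).ConnectedComponent := Quot.finite _
  haveI : Fintype (G.induce Sᶜ).ConnectedComponent := Fintype.ofFinite _
  set B : Finset (Fin n) := Finset.univ.filter (fun i => ∃ e ∈ (T i).edges, e ∈ A) with hB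
  have hAfin : A.Finite := A.toFinite
  have hEKfin : ∀ K, (EK K).Finite := fun K => (EK K).toFinite
  -- |B| ≤ |A|
  have hBcard : B.card ≤ A.ncard := by
    rw [Set.ncard_eq_toFinset_card A hAfin]
    have hch : ∀ i : Fin n, ∃ e : Sym2 V, i ∈ B → (e ∈ (T i).edges ∧ e ∈ A) := by
      intro i
      by_cases hi : i ∈ B
      · obtain ⟨e, he, heA⟩ := (Finset.mem_filter.1 hi).2
        exact ⟨e, fun _ => ⟨he, heA⟩⟩
      · exact ⟨s(s, s), fun h => absurd h hi⟩
    choose f hf using hch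
    apply Finset.card_le_card_of_injOn f
    · intro i hi
      exact hAfin.mem_toFinset.2 (hf i hi).2
    · intro i hi j hj hij
      by_contra hne
      exact hdisj i j hne (f i) (hf i hi).1 (hij ▸ (hf j hj).1)
  -- |Bᶜ| ≤ Σ
  have hBc : Bᶜ.card ≤ ∑ K : (G.induce Sᶜ).ConnectedComponent, (EK K).ncard / 2 := by
    rcases Finset.eq_empty_or_nonempty Bᶜ with he | ⟨i0, hi0⟩
    · simp [he]
    have hQ0 : ∀ i ∈ Bᶜ, ∃ (K : (G.induce Sᶜ).ConnectedComponent) (e1 e2 : Sym2 V),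
        e1 ∈ (T i).edges ∧ e2 ∈ (T i).edges ∧ e1 ≠ e2 ∧ e1 ∈ EK K ∧ e2 ∈ EK K := by
      intro i hi
      rcases key i with h | h
      · exact absurd (Finset.mem_filter.2 ⟨Finset.mem_univ i, h⟩) (Finset.mem_compl.1 hi)
      · exact h
    haveI : Nonempty (G.induce Sᶜ).ConnectedComponent := ⟨(hQ0 i0 hi0).choose⟩
    have hQ : ∀ i : Fin n, ∃ (K : (G.induce Sᶜ).ConnectedComponent) (e1 e2 : Sym2 V),
        i ∈ Bᶜ → (e1 ∈ (T i).edges ∧ e2 ∈ (T i).edges ∧ e1 ≠ e2 ∧ e1 ∈ EK K ∧ e2 ∈ EK K) := by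
      intro i
      by_cases hi : i ∈ Bᶜ
      · obtain ⟨K, e1, e2, h⟩ := hQ0 i hi
        exact ⟨K, e1, e2, fun _ => h⟩
      · exact ⟨Classical.arbitrary _, s(s, s), s(s, s), fun h => absurd h hi⟩
    choose g e1 e2 hg using hQ
    rw [Finset.card_eq_sum_card_fiberwise (f := g) (t := Finset.univ) (fun i _ => Finset.mem_univ _)]
    apply Finset.sum_le_sum
    intro K _
    rw [Set.ncard_eq_toFinset_card _ (hEKfin K), Nat.le_div_iff_mul_le (by norm_num)]
    have : (Bᶜ.filter (fun i => g i = K)).card * 2 =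
        ((Bᶜ.filter (fun i => g i = K)) ×ˢ (Finset.univ : Finset Bool)).card := by
      simp [Finset.card_product]
    rw [this]
    apply Finset.card_le_card_of_injOn (fun p => if p.2 then e1 p.1 else e2 p.1)
    · rintro ⟨i, b⟩ hib
      obtain ⟨hiB, hK⟩ := Finset.mem_filter.1 (Finset.mem_product.1 hib).1
      obtain ⟨_, _, _, hm1, hm2⟩ := hg i hiB
      subst hK
      rw [Finset.mem_coe, (hEKfin _).mem_toFinset]
      dsimp only
      cases b
      · simpa using hm2
      · simpa using hm1
    · rintro ⟨i, b⟩ hib ⟨j, c⟩ hjc hij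
      obtain ⟨hiB, hKi⟩ := Finset.mem_filter.1 (Finset.mem_product.1 hib).1
      obtain ⟨hjB, hKj⟩ := Finset.mem_filter.1 (Finset.mem_product.1 hjc).1
      obtain ⟨hi1, hi2, hine, _, _⟩ := hg i hiB
      obtain ⟨hj1, hj2, hjne, _, _⟩ := hg j hjB
      dsimp only at hij
      have hijeq : i = j := by
        by_contra hne
        have h1 : (if b then e1 i else e2 i) ∈ (T i).edges := by cases b <;> simpa
        have h2 : (if c then e1 j else e2 j) ∈ (T j).edges := by cases c <;> simpa
        exact hdisj i j hne _ h1 (by rw [hij]; exact h2)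
      subst hijeq
      suffices hbc : b = c by rw [hbc]
      by_contra hbc
      apply hine
      cases b <;> cases c
      · exact absurd rfl hbc
      · simpa using hij.symm
      · simpa using hij
      · exact absurd rfl hbc
  -- assemble
  have hsplit : n = B.card + Bᶜ.card := by
    rw [Finset.card_add_card_compl]
    simp
  have hfin : ∑ᶠ K : (G.induce Sᶜ).ConnectedComponent, (EK K).ncard / 2 =
      ∑ K : (G.induce Sᶜ).ConnectedComponent, (EK K).ncard / 2 := finsum_eq_sum_of_fintype _
  calc n = B.card + Bᶜ.card := hsplit
    _ ≤ A.ncard + ∑ K : (G.induce Sᶜ).ConnectedComponent, (EK K).ncard / 2 :=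
        Nat.add_le_add hBcard hBc
    _ = _ := by rw [← hfin]
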